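/- Under the testimony model with evidence impossible under H, i.e. events E_T, E, H with P(E ∩ H) = 0 (so P(E | H) = 0), P(Eᶜ ∩ H) > 0, P(E ∩ Hᶜ) > 0, P(Eᶜ ∩ Hᶜ) > 0, P(E_T | E ∩ H') = P(E_T | E) > 0 and P(E_T | Eᶜ ∩ H') = P(E_T | Eᶜ) > 0 for H' ∈ {H, Hᶜ}, set λ = P(E_T | Eᶜ)/P(E_T | E). Then the effective Bayes factor of H against Hᶜ based on the testimony equals P(E_T | H)/P(E_T | Hᶜ) = 1 / [P(Eᶜ | Hᶜ) + P(E | Hᶜ)/λ]. -/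
import Mathlib


open MeasureTheory Real

/-- The probability of an event `A` (as a real number). -/
noncomputable def pr {Ω : Type*} [MeasurableSpace Ω] (P : Measure Ω) (A : Set Ω) : ℝ :=
  (P A).toReal

/-- The conditional probability `P(A | B) = P(A ∩ B) / P(B)`. -/
noncomputable def cpr {Ω : Type*} [MeasurableSpace Ω] (P : Measure Ω) (A B : Set Ω) : ℝ :=
  pr P (A ∩ B) / pr P B

lemma pr_split {Ω : Type*} [MeasurableSpace Ω] (P : Measure Ω) [IsProbabilityMeasure P]
    (A B : Set Ω) (hB : MeasurableSet B) :
    pr P A = pr P (A ∩ B) + pr P (A ∩ Bᶜ) := by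
  unfold pr
  rw [← ENNReal.toReal_add (measure_ne_top P _) (measure_ne_top P _)]
  congr 1
  rw [← Set.diff_eq]
  exact (measure_inter_add_diff A hB).symm

/-- Evidence impossible under `H` (`P(E|H) = 0`) reported through a testimony:
the effective Bayes factor of `H` against `Hᶜ` equals
`1 / [P(Eᶜ|Hᶜ) + P(E|Hᶜ)/λ]`, where `λ` is the lie factor. -/
theorem testimony_evidence_impossible_under_H
    {Ω : Type*} [MeasurableSpace Ω] (P : Measure Ω) [IsProbabilityMeasure P]
    (Et E H : Set Ω)
    (hEt : MeasurableSet Et) (hE : MeasurableSet E) (hH : MeasurableSet H)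
    (h1 : pr P (E ∩ H) = 0) (h2 : 0 < pr P (Eᶜ ∩ H))
    (h3 : 0 < pr P (E ∩ Hᶜ)) (h4 : 0 < pr P (Eᶜ ∩ Hᶜ))
    (ht2 : cpr P Et (Eᶜ ∩ H) = cpr P Et Eᶜ)
    (ht3 : cpr P Et (E ∩ Hᶜ) = cpr P Et E)
    (ht4 : cpr P Et (Eᶜ ∩ Hᶜ) = cpr P Et Eᶜ)
    (hTE : 0 < cpr P Et E) (hTEc : 0 < cpr P Et Eᶜ) :
    cpr P Et H / cpr P Et Hᶜ =
      1 / (cpr P Eᶜ Hᶜ + cpr P E Hᶜ / (cpr P Et Eᶜ / cpr P Et E)) := by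
  set te := cpr P Et E with hte
  set tc := cpr P Et Eᶜ with htc
  set x := pr P (E ∩ Hᶜ) with hx
  set y := pr P (Eᶜ ∩ Hᶜ) with hy
  set z := pr P (Eᶜ ∩ H) with hz
  -- measure-zero facts
  have hEH0 : P (E ∩ H) = 0 := by
    have h1' : (P (E ∩ H)).toReal = 0 := h1
    exact ((ENNReal.toReal_eq_zero_iff _).mp h1').resolve_right (measure_ne_top P _)
  have hEtEH : pr P (Et ∩ (E ∩ H)) = 0 := by
    unfold pr
    rw [measure_inter_null_of_null_right _ hEH0]
    simp
  -- decomposition of H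
  have hH1 : pr P H = z := by
    have h := pr_split P H E hE
    rw [Set.inter_comm H E, Set.inter_comm H Eᶜ] at h
    rw [h, h1, zero_add]
  have hEtH : pr P (Et ∩ H) = pr P (Et ∩ (Eᶜ ∩ H)) := by
    have h := pr_split P (Et ∩ H) E hE
    rw [show Et ∩ H ∩ E = Et ∩ (E ∩ H) by ext w; simp; tauto,
        show Et ∩ H ∩ Eᶜ = Et ∩ (Eᶜ ∩ H) by ext w; simp; tauto] at h
    rw [h, hEtEH, zero_add]
  -- decomposition of Hᶜ
  have hHc : pr P Hᶜ = x + y := by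
    have h := pr_split P Hᶜ E hE
    rw [Set.inter_comm Hᶜ E, Set.inter_comm Hᶜ Eᶜ] at h
    exact h
  have hEtHc : pr P (Et ∩ Hᶜ) = pr P (Et ∩ (E ∩ Hᶜ)) + pr P (Et ∩ (Eᶜ ∩ Hᶜ)) := by
    have h := pr_split P (Et ∩ Hᶜ) E hE
    rw [show Et ∩ Hᶜ ∩ E = Et ∩ (E ∩ Hᶜ) by ext w; simp; tauto,
        show Et ∩ Hᶜ ∩ Eᶜ = Et ∩ (Eᶜ ∩ Hᶜ) by ext w; simp; tauto] at h
    exact h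
  -- conditional probabilities as products
  have e3 : pr P (Et ∩ (E ∩ Hᶜ)) = te * x := by
    have := ht3
    unfold cpr at this
    exact (div_eq_iff h3.ne').mp this
  have e4 : pr P (Et ∩ (Eᶜ ∩ Hᶜ)) = tc * y := by
    have := ht4
    unfold cpr at this
    exact (div_eq_iff h4.ne').mp this
  have e2 : pr P (Et ∩ (Eᶜ ∩ H)) = tc * z := by
    have := ht2
    unfold cpr at this
    exact (div_eq_iff h2.ne').mp this
  have lhsH : cpr P Et H = tc := by
    unfold cpr
    rw [hEtH, e2, hH1]
    field_simp
  have lhsHc : cpr P Et Hᶜ = (te * x + tc * y) / (x + y) := by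
    unfold cpr
    rw [hEtHc, e3, e4, hHc]
  have rhs1 : cpr P Eᶜ Hᶜ = y / (x + y) := by
    unfold cpr; rw [← hy, hHc]
  have rhs2 : cpr P E Hᶜ = x / (x + y) := by
    unfold cpr; rw [← hx, hHc]
  rw [lhsH, lhsHc, rhs1, rhs2]
  have hxy : (0:ℝ) < x + y := by linarith
  have hnum : (0:ℝ) < te * x + tc * y := by positivity
  have hte0 : te ≠ 0 := hTE.ne'
  have htc0 : tc ≠ 0 := hTEc.ne'
  field_simp
  ring
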